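/- Let f and g be continuous probability densities on [0,1], positive on (0,1), such that f(x)/g(x) is strictly convex on (0,1) and tends to +∞ at both endpoints of (0,1). Then there is no point x ∈ (0,1) where both F(x) = G(x) and f(x) = g(x) hold, where F and G are the c.d.f.'s of f and g. -/

import Mathlib

/-- Under the two-crossing hypotheses, there is no interior point where both the c.d.f.'s
and the densities agree. -/
theorem stmt_4 (f g : ℝ → ℝ)
    (hfc : ContinuousOn f (Set.Icc 0 1)) (hgc : ContinuousOn g (Set.Icc 0 1))
    (hf1 : ∫ x in (0:ℝ)..1, f x = 1) (hg1 : ∫ x in (0:ℝ)..1, g x = 1)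
    (hfpos : ∀ x ∈ Set.Ioo (0:ℝ) 1, 0 < f x)
    (hgpos : ∀ x ∈ Set.Ioo (0:ℝ) 1, 0 < g x)
    (hconv : StrictConvexOn ℝ (Set.Ioo (0:ℝ) 1) (fun x => f x / g x))
    (hlim0 : Filter.Tendsto (fun x => f x / g x) (nhdsWithin 0 (Set.Ioi 0)) Filter.atTop)
    (hlim1 : Filter.Tendsto (fun x => f x / g x) (nhdsWithin 1 (Set.Iio 1)) Filter.atTop)
    (F G : ℝ → ℝ)
    (hF : ∀ x, F x = ∫ t in (0:ℝ)..x, f t)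
    (hG : ∀ x, G x = ∫ t in (0:ℝ)..x, g t)
    (hunique : ∃! x₀, x₀ ∈ Set.Ioo (0:ℝ) 1 ∧ F x₀ = G x₀) :
    ¬ ∃ x ∈ Set.Ioo (0:ℝ) 1, F x = G x ∧ f x = g x := by
  rintro ⟨x, ⟨hx0, hx1⟩, hFG, hfg⟩
  have hgx : 0 < g x := hgpos x ⟨hx0, hx1⟩
  -- integrability on subintervals
  have hif : ∀ a b : ℝ, 0 ≤ a → b ≤ 1 → a ≤ b →
      IntervalIntegrable f MeasureTheory.volume a b := by
    intro a b ha hb hab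
    exact (hfc.mono (by rw [Set.uIcc_of_le hab]; exact Set.Icc_subset_Icc ha hb)).intervalIntegrable
  have hig : ∀ a b : ℝ, 0 ≤ a → b ≤ 1 → a ≤ b →
      IntervalIntegrable g MeasureTheory.volume a b := by
    intro a b ha hb hab
    exact (hgc.mono (by rw [Set.uIcc_of_le hab]; exact Set.Icc_subset_Icc ha hb)).intervalIntegrable
  -- key: strict inequality of integrals on an interval where g < f
  have key : ∀ a b : ℝ, 0 ≤ a → a < b → b ≤ 1 → (∀ y ∈ Set.Ioo a b, g y < f y) →
      (∫ t in a..b, f t) ≤ (∫ t in a..b, g t) → False := by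
    intro a b ha hab hb hlt hle
    have hfi := hif a b ha hb hab.le
    have hgi := hig a b ha hb hab.le
    have hpos : 0 < ∫ t in a..b, (f t - g t) :=
      intervalIntegral.intervalIntegral_pos_of_pos_on (hfi.sub hgi)
        (fun y hy => sub_pos.mpr (hlt y hy)) hab
    rw [intervalIntegral.integral_sub hfi hgi] at hpos
    linarith
  -- on one side of x, the likelihood ratio exceeds 1, i.e. g < f
  have hcut : (∀ y ∈ Set.Ioo x 1, g y < f y) ∨ (∀ y ∈ Set.Ioo (0:ℝ) x, g y < f y) := by
    by_contra h
    push_neg at h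
    obtain ⟨⟨b, hb, hfb⟩, ⟨a, ha, hfa⟩⟩ := h
    have hga := hgpos a ⟨ha.1, ha.2.trans hx1⟩
    have hgb := hgpos b ⟨hx0.trans hb.1, hb.2⟩
    have hta : f a / g a ≤ 1 := (div_le_one hga).mpr hfa
    have htb : f b / g b ≤ 1 := (div_le_one hgb).mpr hfb
    have hab : a < b := ha.2.trans hb.1
    have hba : (0:ℝ) < b - a := by linarith
    set lam : ℝ := (b - x) / (b - a) with hlamdef
    set mu : ℝ := (x - a) / (b - a) with hmudef
    have hlam : 0 < lam := div_pos (by linarith [hb.1]) hba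
    have hmu : 0 < mu := div_pos (by linarith [ha.2]) hba
    have hsum : lam + mu = 1 := by
      rw [hlamdef, hmudef]; field_simp; ring
    have hcomb : lam • a + mu • b = x := by
      rw [hlamdef, hmudef]; simp only [smul_eq_mul]; field_simp; ring
    have hlt := hconv.2 (Set.mem_Ioo.mpr ⟨ha.1, ha.2.trans hx1⟩)
      (Set.mem_Ioo.mpr ⟨hx0.trans hb.1, hb.2⟩) (ne_of_lt hab) hlam hmu hsum
    rw [hcomb] at hlt
    have hx1' : f x / g x = 1 := by rw [hfg]; exact div_self hgx.ne'
    simp only [smul_eq_mul, hx1'] at hlt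
    nlinarith [mul_le_mul_of_nonneg_left hta hlam.le, mul_le_mul_of_nonneg_left htb hmu.le]
  rcases hcut with h | h
  · refine key x 1 hx0.le hx1 le_rfl h ?_
    have ef : (∫ t in (0:ℝ)..x, f t) + ∫ t in x..1, f t = 1 := by
      rw [intervalIntegral.integral_add_adjacent_intervals
        (hif 0 x le_rfl hx1.le hx0.le) (hif x 1 hx0.le le_rfl hx1.le), hf1]
    have eg : (∫ t in (0:ℝ)..x, g t) + ∫ t in x..1, g t = 1 := by
      rw [intervalIntegral.integral_add_adjacent_intervals
        (hig 0 x le_rfl hx1.le hx0.le) (hig x 1 hx0.le le_rfl hx1.le), hg1]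
    have := hFG
    rw [hF x, hG x] at this
    linarith
  · refine key 0 x le_rfl hx0 hx1.le h ?_
    have := hFG
    rw [hF x, hG x] at this
    linarith
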